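/- Assume additionally that N₀ − z₀ is not boundedly invertible and that the operator-valued function v ↦ R(v) is meromorphic at v = 0. Then the function v ↦ R(v) ∘ W is also meromorphic at v = 0, both functions have a pole at v = 0 (negative meromorphic order), and the meromorphic order of v ↦ R(v) at 0 is equal to the meromorphic order of v ↦ R(v) ∘ W at 0. -/

import Mathlib

open Filter Topology


/-- If `N₀ - z₀` is not boundedly invertible and the resolvent
`v ↦ R v = (N₀ + v W - z₀)⁻¹` (defined on a punctured disc of radius `r`) is meromorphic
at `v = 0`, then `v ↦ R v ∘ W` is also meromorphic at `0`, both have a pole at `0`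
(negative meromorphic order), and their meromorphic orders at `0` coincide. -/
theorem resolvent_and_resolvent_comp_perturbation_same_pole_order
    {H : Type*} [NormedAddCommGroup H] [InnerProductSpace ℂ H] [CompleteSpace H]
    (N₀ W : H →L[ℂ] H) (z₀ : ℂ) (r : ℝ) (hr : 0 < r)
    (R : ℂ → (H →L[ℂ] H))
    (hR : ∀ v : ℂ, v ≠ 0 → ‖v‖ ≤ r →
      (N₀ + v • W - z₀ • (1 : H →L[ℂ] H)) * R v = 1 ∧
      R v * (N₀ + v • W - z₀ • (1 : H →L[ℂ] H)) = 1)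
    (hsing : ¬ IsUnit (N₀ - z₀ • (1 : H →L[ℂ] H)))
    (hmero : MeromorphicAt R 0) :
    ∃ hmero' : MeromorphicAt (fun v => R v * W) 0,
      meromorphicOrderAt R 0 < 0 ∧ meromorphicOrderAt (fun v => R v * W) 0 < 0 ∧
        meromorphicOrderAt R 0 = meromorphicOrderAt (fun v => R v * W) 0 := by
  set X : ℂ → (H →L[ℂ] H) := fun v => N₀ + v • W - z₀ • 1 with hXdef
  have hXcont : Continuous X :=
    (continuous_const.add (continuous_id.smul continuous_const)).sub continuous_const
  have hX0 : X 0 = N₀ - z₀ • 1 := by simp [hXdef]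
  have hEv : ∀ᶠ v in 𝓝[≠] (0:ℂ), X v * R v = 1 ∧ R v * X v = 1 := by
    have h1 : ∀ᶠ v in 𝓝 (0:ℂ), ‖v‖ ≤ r := by
      filter_upwards [Metric.closedBall_mem_nhds (0:ℂ) hr] with v hv
      simpa [Metric.mem_closedBall, dist_zero_right] using hv
    rw [eventually_nhdsWithin_iff]
    filter_upwards [h1] with v hv hne
    exact hR v hne hv
  -- Step 1: order is negative
  have horder_neg : meromorphicOrderAt R 0 < 0 := by
    by_contra hcon
    push_neg at hcon
    obtain ⟨G, hGan, hGeq⟩ : ∃ G : ℂ → (H →L[ℂ] H), ContinuousAt G 0 ∧ R =ᶠ[𝓝[≠] (0:ℂ)] G := by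
      rcases eq_or_ne (meromorphicOrderAt R 0) ⊤ with htop | hne
      · exact ⟨0, continuousAt_const, meromorphicOrderAt_eq_top_iff.mp htop⟩
      · obtain ⟨m, hm⟩ := WithTop.ne_top_iff_exists.mp hne
        obtain ⟨g, hg, hgne, hgeq⟩ := (meromorphicOrderAt_eq_int_iff (n := m) hmero).mp hm.symm
        have hm0 : 0 ≤ m := by
          rw [← hm] at hcon
          exact_mod_cast hcon
        refine ⟨fun v => v ^ m.toNat • g v, ?_, ?_⟩
        · exact ((continuous_id.pow _).continuousAt).smul hg.continuousAt
        · filter_upwards [hgeq, self_mem_nhdsWithin] with v hv hv0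
          rw [hv]
          simp only [sub_zero]
          rw [← zpow_natCast, Int.toNat_of_nonneg hm0]
    have t1 : Tendsto (fun v => X v * R v) (𝓝[≠] (0:ℂ)) (𝓝 (X 0 * G 0)) := by
      refine Tendsto.congr' ?_ (((hXcont.continuousAt.mul hGan)).tendsto.mono_left
        nhdsWithin_le_nhds)
      filter_upwards [hGeq] with v hv
      rw [hv]; rfl
    have t2 : Tendsto (fun v => X v * R v) (𝓝[≠] (0:ℂ)) (𝓝 1) :=
      Tendsto.congr' (hEv.mono fun v h => h.1.symm) tendsto_const_nhds
    have h1 : X 0 * G 0 = 1 := tendsto_nhds_unique t1 t2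
    have t3 : Tendsto (fun v => R v * X v) (𝓝[≠] (0:ℂ)) (𝓝 (G 0 * X 0)) := by
      refine Tendsto.congr' ?_ (((hGan.mul hXcont.continuousAt)).tendsto.mono_left
        nhdsWithin_le_nhds)
      filter_upwards [hGeq] with v hv
      rw [hv]; rfl
    have t4 : Tendsto (fun v => R v * X v) (𝓝[≠] (0:ℂ)) (𝓝 1) :=
      Tendsto.congr' (hEv.mono fun v h => h.2.symm) tendsto_const_nhds
    have h2 : G 0 * X 0 = 1 := tendsto_nhds_unique t3 t4
    exact hsing ⟨⟨N₀ - z₀ • 1, G 0, by rw [← hX0]; exact h1, by rw [← hX0]; exact h2⟩, rfl⟩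
  -- Step 2: extract the order
  have hne_top : meromorphicOrderAt R 0 ≠ ⊤ := horder_neg.ne_top
  obtain ⟨m, hm⟩ := WithTop.ne_top_iff_exists.mp hne_top
  have hmneg : m < 0 := by
    rw [← hm] at horder_neg
    exact_mod_cast horder_neg
  obtain ⟨g, hgan, hgne, hgeq⟩ := (meromorphicOrderAt_eq_int_iff (n := m) hmero).mp hm.symm
  simp only [sub_zero] at hgeq
  set n : ℕ := (-m).toNat with hndef
  have hn : (n:ℤ) = -m := Int.toNat_of_nonneg (by omega)
  have hn1 : 1 ≤ n := by omega
  -- key eventual identity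
  have hkey : ∀ᶠ v in 𝓝[≠] (0:ℂ), g v * X v = v ^ n • 1 := by
    filter_upwards [hEv, hgeq, self_mem_nhdsWithin] with v hv hv2 hv0
    have hv0' : v ≠ 0 := hv0
    have h1 : v ^ m • (g v * X v) = 1 := by
      rw [← smul_mul_assoc, ← hv2]
      exact hv.2
    have h2 : v ^ (-m) • (v ^ m • (g v * X v)) = v ^ (-m) • (1 : H →L[ℂ] H) := by rw [h1]
    rw [smul_smul, ← zpow_add₀ hv0', neg_add_cancel, zpow_zero, one_smul] at h2
    rw [h2, ← hn, zpow_natCast]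
  -- limit : g 0 * X 0 = 0
  have hA0 : g 0 * X 0 = 0 := by
    have t1 : Tendsto (fun v => g v * X v) (𝓝[≠] (0:ℂ)) (𝓝 (g 0 * X 0)) :=
      ((hgan.continuousAt.mul hXcont.continuousAt)).tendsto.mono_left nhdsWithin_le_nhds
    have t2 : Tendsto (fun v => g v * X v) (𝓝[≠] (0:ℂ)) (𝓝 0) := by
      refine Tendsto.congr' (hkey.mono fun v hv => hv.symm) ?_
      have h3 : Tendsto (fun v : ℂ => v ^ n • (1 : H →L[ℂ] H)) (𝓝 0) (𝓝 ((0:ℂ) ^ n • 1)) :=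
        ((continuous_id.pow _).smul continuous_const).continuousAt.tendsto
      rw [zero_pow (by omega), zero_smul] at h3
      exact h3.mono_left nhdsWithin_le_nhds
    exact tendsto_nhds_unique t1 t2
  -- g 0 * W ≠ 0
  have hAW : g 0 * W ≠ 0 := by
    intro hAW
    obtain ⟨v, ⟨⟨⟨hv1, hv2⟩, hv3⟩, hv4⟩, hv0⟩ :=
      (((hEv.and hgeq).and hkey).and self_mem_nhdsWithin).exists
    have hv0' : (v:ℂ) ≠ 0 := hv0
    have hXv : X v = X 0 + v • W := by
      rw [hX0]
      simp only [hXdef]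
      abel
    have hAXv : g 0 * X v = 0 := by
      rw [hXv, mul_add, hA0, mul_smul_comm, hAW, smul_zero, add_zero]
    have hsub : (g v - g 0) * X v = v ^ n • 1 := by
      rw [sub_mul, hAXv, sub_zero, hv4]
    have hpow : (v:ℂ) ^ n * v ^ m = 1 := by
      rw [← zpow_natCast, ← zpow_add₀ hv0', hn, neg_add_cancel, zpow_zero]
    have hfin : g v - g 0 = g v := by
      have hc := congrArg (· * R v) hsub
      rw [mul_assoc, hv1, mul_one, smul_mul_assoc, one_mul, hv3, smul_smul, hpow,
        one_smul] at hc
      exact hc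
    exact hgne (sub_eq_self.mp hfin)
  -- assemble
  have hmero2 := hmero
  obtain ⟨N, hN⟩ := hmero2
  have hmero' : MeromorphicAt (fun v => R v * W) 0 := by
    refine ⟨N, ?_⟩
    have h := hN.mul (analyticAt_const (v := W))
    simp only [smul_mul_assoc] at h ⊢
    exact h
  have horder' : meromorphicOrderAt (fun v => R v * W) 0 = m := by
    rw [meromorphicOrderAt_eq_int_iff hmero']
    refine ⟨fun v => g v * W, hgan.mul analyticAt_const, hAW, ?_⟩
    filter_upwards [hgeq] with v hv
    rw [hv, sub_zero, smul_mul_assoc]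
  refine ⟨hmero', horder_neg, ?_, ?_⟩
  · rw [horder']
    exact_mod_cast hmneg
  · rw [← hm, horder']
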